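/- arXiv:1806.00664 — 4 statements merged into one kernel-verified Lean document; each statement's English description precedes it below -/
import Mathlib

section
/- Let A be an n×n symmetric 0-1 matrix belonging to the class M_n(δ, s): A_{ij} = 1 whenever |i − j| ≤ δ, and the number of nonzero entries of A equals (n + (2n−1)δ − δ²) + s, where 0 ≤ s ≤ n − δ − 1. Then the identity permutation minimizes, over all permutations π of {1,…,n}, the objective Σ_{i,j} A_{ij}·min(δ², |π(i) − π(j)|²). -/
open Finset

/-- Proposition 2.3, first half: if `A ∈ M_n(δ, s)` (symmetric binary, all
entries within distance `δ` of the diagonal equal `1`, with exactly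
`(n + (2n−1)δ − δ²) + s` nonzero entries, `s ≤ n − δ − 1`), then the
identity permutation minimizes the R2SUM objective with `λ = δ²`. -/
theorem identity_minimizes_R2SUM (n δ s : ℕ) (hδn : δ ≤ n)
    (hs : s ≤ n - δ - 1)
    (A : Fin n → Fin n → ℝ)
    (hsym : ∀ i j, A i j = A j i)
    (hbin : ∀ i j, A i j = 0 ∨ A i j = 1)
    (hband : ∀ i j : Fin n, ((i : ℤ) - (j : ℤ)).natAbs ≤ δ → A i j = 1)
    (hnnz : ((univ : Finset (Fin n × Fin n)).filter
        (fun p => A p.1 p.2 ≠ 0)).card = (n + (2 * n - 1) * δ - δ ^ 2) + s) :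
    ∀ π : Equiv.Perm (Fin n),
      ∑ i, ∑ j, A i j *
          min ((δ : ℝ) ^ 2) ((((π i : ℤ) - (π j : ℤ)).natAbs : ℝ) ^ 2)
        ≥ ∑ i, ∑ j, A i j *
          min ((δ : ℝ) ^ 2) ((((i : ℤ) - (j : ℤ)).natAbs : ℝ) ^ 2) := by
  classical
  intro π
  set S : Finset (Fin n × Fin n) :=
    (univ : Finset (Fin n × Fin n)).filter (fun p => A p.1 p.2 ≠ 0) with hSdef
  set f : Fin n × Fin n → ℝ :=
    fun p => min ((δ : ℝ) ^ 2) ((((π p.1 : ℤ) - (π p.2 : ℤ)).natAbs : ℝ) ^ 2) with hf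
  set g : Fin n × Fin n → ℝ :=
    fun p => min ((δ : ℝ) ^ 2) ((((p.1 : ℤ) - (p.2 : ℤ)).natAbs : ℝ) ^ 2) with hg
  -- rewrite both sides as sums over the support S
  have key : ∀ F : Fin n × Fin n → ℝ,
      (∑ i, ∑ j, A i j * F (i, j)) = ∑ p ∈ S, F p := by
    intro F
    rw [← Finset.sum_product', hSdef, Finset.sum_filter]
    rw [Finset.univ_product_univ]
    apply Finset.sum_congr rfl
    intro p _
    rcases hbin p.1 p.2 with h | h
    · simp [h]
    · simp [h]
  have hL : (∑ i, ∑ j, A i j *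
      min ((δ : ℝ) ^ 2) ((((π i : ℤ) - (π j : ℤ)).natAbs : ℝ) ^ 2)) = ∑ p ∈ S, f p :=
    key f
  have hR : (∑ i, ∑ j, A i j *
      min ((δ : ℝ) ^ 2) ((((i : ℤ) - (j : ℤ)).natAbs : ℝ) ^ 2)) = ∑ p ∈ S, g p :=
    key g
  rw [hL, hR, ge_iff_le]
  -- total sums over all pairs agree, by the bijection p ↦ (π p.1, π p.2)
  have htot : ∑ p : Fin n × Fin n, f p = ∑ p : Fin n × Fin n, g p := by
    apply Fintype.sum_equiv (Equiv.prodCongr π π)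
    intro p
    rfl
  -- off the support, g is exactly δ² and f is at most δ²
  have hcompl : ∀ p ∈ Sᶜ, f p ≤ g p := by
    intro p hp
    have hpS : p ∉ S := Finset.mem_compl.mp hp
    have hA : A p.1 p.2 = 0 := by
      by_contra h
      exact hpS (Finset.mem_filter.mpr ⟨Finset.mem_univ _, h⟩)
    have hout : ¬ (((p.1 : ℤ) - (p.2 : ℤ)).natAbs ≤ δ) := by
      intro h
      have := hband p.1 p.2 h
      rw [hA] at this
      norm_num at this
    have hδlt : (δ : ℝ) ≤ ((((p.1 : ℤ) - (p.2 : ℤ)).natAbs : ℕ) : ℝ) := by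
      push_neg at hout
      exact_mod_cast hout.le
    have hsq : (δ : ℝ) ^ 2 ≤ ((((p.1 : ℤ) - (p.2 : ℤ)).natAbs : ℕ) : ℝ) ^ 2 := by
      apply pow_le_pow_left₀ (by positivity) hδlt
    have hgp : g p = (δ : ℝ) ^ 2 := min_eq_left hsq
    rw [hgp, hf]
    exact min_le_left _ _
  have hsumc : ∑ p ∈ Sᶜ, f p ≤ ∑ p ∈ Sᶜ, g p := Finset.sum_le_sum hcompl
  have hsplitf : ∑ p ∈ S, f p + ∑ p ∈ Sᶜ, f p = ∑ p : Fin n × Fin n, f p :=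
    Finset.sum_add_sum_compl S f
  have hsplitg : ∑ p ∈ S, g p + ∑ p ∈ Sᶜ, g p = ∑ p : Fin n × Fin n, g p :=
    Finset.sum_add_sum_compl S g
  linarith
end

section
/- Given a binary symmetric matrix S ∈ {0,1}^{n×n}, there exists a binary matrix R ∈ {0,1}^{n×n} that is a strong-R matrix and minimizes the ℓ1 distance Σ_{i,j} |R_{ij} − S_{ij}| over all (real-valued) strong-R matrices with entries in [0,1]. -/
open Finset

/-- Threshold matrix: 1 when the banded distance is below `t`. -/
noncomputable def Tmat (n t : ℕ) : Fin n → Fin n → ℝ :=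
  fun i j => if ((i : ℤ) - (j : ℤ)).natAbs < t then 1 else 0

/-- Linear part of the ℓ1 cost. -/
noncomputable def Lfun (n : ℕ) (S R : Fin n → Fin n → ℝ) : ℝ :=
  ∑ i, ∑ j, (1 - 2 * S i j) * R i j

lemma cost_eq (n : ℕ) (S R : Fin n → Fin n → ℝ)
    (hbin : ∀ i j, S i j = 0 ∨ S i j = 1)
    (hR : ∀ i j, 0 ≤ R i j ∧ R i j ≤ 1) :
    ∑ i, ∑ j, |R i j - S i j| = Lfun n S R + ∑ i, ∑ j, S i j := by
  have key : ∀ i j, |R i j - S i j| = (1 - 2 * S i j) * R i j + S i j := by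
    intro i j
    rcases hR i j with ⟨h0, h1⟩
    rcases hbin i j with h | h <;> rw [h]
    · rw [abs_of_nonneg (by linarith)]; ring
    · rw [abs_of_nonpos (by linarith)]; ring
  simp only [key, Finset.sum_add_distrib, Lfun]

lemma tele (f : ℕ → ℝ) (d m : ℕ) (h : d ≤ m) :
    ∑ t ∈ Finset.Ico d m, (f t - f (t + 1)) = f d - f m := by
  induction m with
  | zero => interval_cases d; simp
  | succ m ih =>
    rcases Nat.lt_or_ge d (m + 1) with hd | hd
    · rw [Finset.sum_Ico_succ_top (by omega), ih (by omega)]; ring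
    · have : d = m + 1 := by omega
      subst this; simp

/-- ℓ1 projection of a symmetric binary matrix onto the set of strong-R
matrices with entries in `[0,1]` can be taken binary: there exists a binary
strong-R matrix `R` minimizing `Σ_{i,j} |R_{ij} − S_{ij}|` over all
real-valued strong-R matrices with entries in `[0,1]`. -/
theorem binary_strongR_l1_projection (n : ℕ) (S : Fin n → Fin n → ℝ)
    (hsym : ∀ i j, S i j = S j i)
    (hbin : ∀ i j, S i j = 0 ∨ S i j = 1) :
    ∃ R : Fin n → Fin n → ℝ,
      (∀ i j, R i j = 0 ∨ R i j = 1) ∧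
      (∀ i j, R i j = R j i) ∧
      (∀ i j k l : Fin n,
        ((k : ℤ) - (l : ℤ)).natAbs ≤ ((i : ℤ) - (j : ℤ)).natAbs →
        R i j ≤ R k l) ∧
      (∀ R' : Fin n → Fin n → ℝ,
        (∀ i j, 0 ≤ R' i j ∧ R' i j ≤ 1) →
        (∀ i j, R' i j = R' j i) →
        (∀ i j k l : Fin n,
          ((k : ℤ) - (l : ℤ)).natAbs ≤ ((i : ℤ) - (j : ℤ)).natAbs →
          R' i j ≤ R' k l) →
        ∑ i, ∑ j, |R i j - S i j| ≤ ∑ i, ∑ j, |R' i j - S i j|) := by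
  classical
  rcases Nat.eq_zero_or_pos n with hn | hn
  · subst hn
    exact ⟨fun _ _ => 0, fun i => i.elim0, fun i => i.elim0, fun i => i.elim0,
      fun R' _ _ _ => by simp⟩
  obtain ⟨t0, ht0mem, ht0⟩ := Finset.exists_min_image (Finset.range (n + 1))
    (fun t => Lfun n S (Tmat n t)) ⟨0, by simp⟩
  have hTbin : ∀ t (i j : Fin n), Tmat n t i j = 0 ∨ Tmat n t i j = 1 := by
    intro t i j; unfold Tmat; split
    · right; rfl
    · left; rfl
  have hTbnd : ∀ t (i j : Fin n), 0 ≤ Tmat n t i j ∧ Tmat n t i j ≤ 1 := by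
    intro t i j; rcases hTbin t i j with h | h <;> rw [h] <;> norm_num
  refine ⟨Tmat n t0, hTbin t0, ?_, ?_, ?_⟩
  · intro i j
    have : ((i : ℤ) - j).natAbs = ((j : ℤ) - i).natAbs := by omega
    unfold Tmat; rw [this]
  · intro i j k l h
    by_cases h1 : ((i : ℤ) - j).natAbs < t0
    · have h2 : ((k : ℤ) - l).natAbs < t0 := lt_of_le_of_lt h h1
      simp [Tmat, h1, h2]
    · simp only [Tmat, if_neg h1]
      split <;> norm_num
  intro R' hbnd hsym' hmono
  rw [cost_eq n S _ hbin (hTbnd t0), cost_eq n S R' hbin hbnd]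
  have hmain : Lfun n S (Tmat n t0) ≤ Lfun n S R' := by
    set f : ℕ → ℝ := fun d => if h : d < n then R' ⟨0, hn⟩ ⟨d, h⟩ else 0 with hf
    have hdlt : ∀ i j : Fin n, ((i : ℤ) - j).natAbs < n := by
      intro i j
      have hi := i.isLt; have hj := j.isLt
      omega
    have hfval : ∀ i j : Fin n, R' i j = f (((i : ℤ) - j).natAbs) := by
      intro i j
      have hd := hdlt i j
      rw [hf]
      simp only [dif_pos hd]
      have hc : (((⟨0, hn⟩ : Fin n) : ℤ) - ((⟨((i : ℤ) - j).natAbs, hd⟩ : Fin n) : ℤ)).natAbs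
          = ((i : ℤ) - j).natAbs := by
        simp only [Fin.val_mk]; omega
      exact le_antisymm (hmono i j _ _ (le_of_eq hc)) (hmono _ _ i j (ge_of_eq hc))
    have hf0 : ∀ d, 0 ≤ f d := by
      intro d; rw [hf]; dsimp only
      split
      · exact (hbnd _ _).1
      · exact le_refl 0
    have hf1 : f 0 ≤ 1 := by
      rw [hf]; dsimp only
      rw [dif_pos hn]
      exact (hbnd _ _).2
    have hfn0 : f n = 0 := by rw [hf]; simp
    have hfmono : ∀ t, f (t + 1) ≤ f t := by
      intro t
      rw [hf]; dsimp only
      split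
      · rename_i h1
        rw [dif_pos (by omega : t < n)]
        refine hmono ⟨0, hn⟩ ⟨t + 1, h1⟩ ⟨0, hn⟩ ⟨t, by omega⟩ ?_
        simp only [Fin.val_mk]
        omega
      · split
        · exact (hbnd _ _).1
        · exact le_refl 0
    have hpt : ∀ i j : Fin n,
        R' i j = ∑ t ∈ Finset.range n, (f t - f (t + 1)) * Tmat n (t + 1) i j := by
      intro i j
      have hd := hdlt i j
      have he : ∀ t, (f t - f (t + 1)) * Tmat n (t + 1) i j
          = if ((i : ℤ) - j).natAbs < t + 1 then f t - f (t + 1) else 0 := by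
        intro t; unfold Tmat; split <;> simp
      rw [hfval i j]
      simp only [he]
      rw [← Finset.sum_filter]
      have hfe : (Finset.range n).filter (fun t => ((i : ℤ) - j).natAbs < t + 1)
          = Finset.Ico (((i : ℤ) - j).natAbs) n := by
        ext t; simp only [Finset.mem_filter, Finset.mem_range, Finset.mem_Ico]; omega
      rw [hfe, tele f _ n (by omega), hfn0, sub_zero]
    have hswap : Lfun n S R'
        = ∑ t ∈ Finset.range n, (f t - f (t + 1)) * Lfun n S (Tmat n (t + 1)) := by
      unfold Lfun
      simp only [hpt, Finset.mul_sum]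
      have h1 : ∀ i : Fin n,
          (∑ j, ∑ t ∈ Finset.range n,
            (1 - 2 * S i j) * ((f t - f (t + 1)) * Tmat n (t + 1) i j))
          = ∑ t ∈ Finset.range n, ∑ j,
            (1 - 2 * S i j) * ((f t - f (t + 1)) * Tmat n (t + 1) i j) :=
        fun i => Finset.sum_comm
      simp only [h1]
      rw [Finset.sum_comm]
      exact Finset.sum_congr rfl fun t _ => Finset.sum_congr rfl fun i _ =>
        Finset.sum_congr rfl fun j _ => by ring
    have hμ : ∀ t, 0 ≤ f t - f (t + 1) := fun t => by linarith [hfmono t]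
    have hsumμ : ∑ t ∈ Finset.range n, (f t - f (t + 1)) = f 0 := by
      rw [← Nat.Ico_zero_eq_range, tele f 0 n (by omega), hfn0, sub_zero]
    have hm0 : Lfun n S (Tmat n t0) ≤ 0 := by
      have h := ht0 0 (by simp)
      have hz : Lfun n S (Tmat n 0) = 0 := by
        unfold Lfun Tmat; simp
      simpa [hz] using h
    calc Lfun n S (Tmat n t0) = 1 * Lfun n S (Tmat n t0) := (one_mul _).symm
      _ ≤ f 0 * Lfun n S (Tmat n t0) := mul_le_mul_of_nonpos_right hf1 hm0
      _ = (∑ t ∈ Finset.range n, (f t - f (t + 1))) * Lfun n S (Tmat n t0) := by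
          rw [hsumμ]
      _ = ∑ t ∈ Finset.range n, (f t - f (t + 1)) * Lfun n S (Tmat n t0) :=
          Finset.sum_mul ..
      _ ≤ ∑ t ∈ Finset.range n, (f t - f (t + 1)) * Lfun n S (Tmat n (t + 1)) := by
          refine Finset.sum_le_sum fun t ht => ?_
          refine mul_le_mul_of_nonneg_left (ht0 (t + 1) ?_) (hμ t)
          simp only [Finset.mem_range] at ht ⊢
          omega
      _ = Lfun n S R' := hswap.symm
  linarith
end

section
/- Let g ∈ ℝⁿ, let i ≠ j be fixed indices, and consider minimizing Σ_k π_k g_k over permutation vectors π of (1,…,n) satisfying π_i + 1 ≤ π_j. A minimizer exists at which either the unconstrained sorted solution already satisfies the constraint, or the constraint is active: π_j = π_i + 1. -/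
open Finset

lemma sum_swap_diff {n : ℕ} (g : Fin n → ℝ) (π : Equiv.Perm (Fin n))
    {p q : Fin n} (hpq : p ≠ q) :
    ∑ k, (((π * Equiv.swap p q) k : ℝ) + 1) * g k
      = (∑ k, ((π k : ℝ) + 1) * g k)
        + (((π q : ℝ) - (π p : ℝ)) * g p + ((π p : ℝ) - (π q : ℝ)) * g q) := by
  have hdiff : ∀ k ∈ (Finset.univ : Finset (Fin n)), k ∉ ({p, q} : Finset (Fin n)) →
      ((((π * Equiv.swap p q) k : Fin n) : ℝ) + 1) * g k - ((π k : ℝ) + 1) * g k = 0 := by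
    intro k _ hk
    simp only [Finset.mem_insert, Finset.mem_singleton, not_or] at hk
    rw [show (π * Equiv.swap p q) k = π k by
      simp [Equiv.Perm.mul_apply, Equiv.swap_apply_of_ne_of_ne hk.1 hk.2]]
    ring
  have h1 : ∑ k, ((((π * Equiv.swap p q) k : Fin n) : ℝ) + 1) * g k
      - ∑ k, ((π k : ℝ) + 1) * g k
      = ∑ k ∈ ({p, q} : Finset (Fin n)),
          (((((π * Equiv.swap p q) k : Fin n) : ℝ) + 1) * g k
            - ((π k : ℝ) + 1) * g k) := by
    rw [← Finset.sum_sub_distrib]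
    exact (Finset.sum_subset (Finset.subset_univ _) hdiff).symm
  rw [Finset.sum_pair hpq] at h1
  have hp : (π * Equiv.swap p q) p = π q := by simp [Equiv.Perm.mul_apply]
  have hq : (π * Equiv.swap p q) q = π p := by simp [Equiv.Perm.mul_apply]
  rw [hp, hq] at h1
  linarith [h1]

/-- Structure of the tie-break-constrained LMO (Lim–Wright): given `g ∈ ℝⁿ`,
fixed indices `i ≠ j`, and an unconstrained minimizer `π₀` of
`Σ_k π_k g_k` over permutation vectors of `(1,…,n)`, there exists a
minimizer `π` of the problem constrained by `π_i + 1 ≤ π_j` which either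
equals `π₀` (when `π₀` is feasible) or saturates the constraint
(`π_j = π_i + 1`). -/
theorem lmo_tiebreak_structure (n : ℕ) (g : Fin n → ℝ) (i j : Fin n)
    (hij : i ≠ j) (π₀ : Equiv.Perm (Fin n))
    (hopt : ∀ τ : Equiv.Perm (Fin n),
      ∑ k, ((π₀ k : ℝ) + 1) * g k ≤ ∑ k, ((τ k : ℝ) + 1) * g k) :
    ∃ π : Equiv.Perm (Fin n),
      ((π i : ℕ) + 1 ≤ (π j : ℕ)) ∧
      (∀ τ : Equiv.Perm (Fin n), (τ i : ℕ) + 1 ≤ (τ j : ℕ) →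
        ∑ k, ((π k : ℝ) + 1) * g k ≤ ∑ k, ((τ k : ℝ) + 1) * g k) ∧
      (π = π₀ ∨ (π j : ℕ) = (π i : ℕ) + 1) := by
  classical
  set f : Equiv.Perm (Fin n) → ℝ := fun τ => ∑ k, ((τ k : ℝ) + 1) * g k with hf
  by_cases hfeas : (π₀ i : ℕ) + 1 ≤ (π₀ j : ℕ)
  · exact ⟨π₀, hfeas, fun τ _ => hopt τ, Or.inl rfl⟩
  -- π₀ infeasible: π₀ j < π₀ i
  have hne0 : (π₀ j : ℕ) ≠ (π₀ i : ℕ) := by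
    intro h
    exact hij (π₀.injective (Fin.val_injective h)).symm
  have hji : (π₀ j : ℕ) + 1 ≤ (π₀ i : ℕ) := by omega
  -- g i ≤ g j, by exchange optimality of π₀
  have hgij : g i ≤ g j := by
    have h := hopt (π₀ * Equiv.swap i j)
    rw [sum_swap_diff g π₀ hij] at h
    have hc : ((π₀ j : ℕ) : ℝ) + 1 ≤ ((π₀ i : ℕ) : ℝ) := by exact_mod_cast hji
    nlinarith [h, hc]
  -- feasible set
  set S : Finset (Equiv.Perm (Fin n)) :=
    Finset.univ.filter (fun τ => (τ i : ℕ) + 1 ≤ (τ j : ℕ)) with hS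
  have hmemS : ∀ τ : Equiv.Perm (Fin n), τ ∈ S ↔ (τ i : ℕ) + 1 ≤ (τ j : ℕ) := by
    intro τ; simp [hS]
  have hSne : (π₀ * Equiv.swap i j) ∈ S := by
    rw [hmemS]
    simp only [Equiv.Perm.mul_apply, Equiv.swap_apply_left, Equiv.swap_apply_right]
    exact hji
  obtain ⟨π₁, hπ₁S, hπ₁min⟩ := S.exists_min_image f ⟨_, hSne⟩
  set S2 : Finset (Equiv.Perm (Fin n)) := S.filter (fun τ => f τ = f π₁) with hS2
  obtain ⟨π, hπS2, hπgap⟩ :=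
    S2.exists_min_image (fun τ => (τ j : ℕ) - (τ i : ℕ)) ⟨π₁, by simp [hS2, hπ₁S]⟩
  have hπS : π ∈ S := (Finset.mem_filter.mp hπS2).1
  have hπf : f π = f π₁ := (Finset.mem_filter.mp hπS2).2
  have hπfeas : (π i : ℕ) + 1 ≤ (π j : ℕ) := (hmemS π).mp hπS
  have hπmin : ∀ τ ∈ S, f π ≤ f τ := by
    intro τ hτ; rw [hπf]; exact hπ₁min τ hτ
  -- the constraint is active at π
  have hact : (π j : ℕ) = (π i : ℕ) + 1 := by
    by_contra hna
    have hlt : (π i : ℕ) + 1 < (π j : ℕ) := lt_of_le_of_ne hπfeas (fun h => hna h.symm)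
    have hvlt : (π i : ℕ) + 1 < n := lt_trans hlt (π j).isLt
    set v : Fin n := ⟨(π i : ℕ) + 1, hvlt⟩ with hv
    set m : Fin n := π.symm v with hm
    have hπm : π m = v := π.apply_symm_apply v
    have hπmval : (π m : ℕ) = (π i : ℕ) + 1 := by rw [hπm]
    have hmi : m ≠ i := by
      intro h; rw [h] at hπmval; omega
    have hmj : m ≠ j := by
      intro h; rw [h] at hπmval; omega
    have hπmR : ((π m : ℕ) : ℝ) = ((π i : ℕ) : ℝ) + 1 := by exact_mod_cast hπmval
    -- τ1 : swap positions i and m; strictly smaller gap, so strictly worse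
    have hτ1 : f (π * Equiv.swap i m) = f π + (g i - g m) := by
      rw [hf]
      beta_reduce
      rw [sum_swap_diff g π (fun h => hmi h.symm)]
      rw [hπmR]; ring
    have hτ1S : (π * Equiv.swap i m) ∈ S := by
      rw [hmemS]
      simp only [Equiv.Perm.mul_apply, Equiv.swap_apply_left,
        Equiv.swap_apply_of_ne_of_ne hij.symm (fun h => hmj h.symm)]
      rw [hπmval]; omega
    have hgm_lt : g m < g i := by
      by_contra hge
      push_neg at hge
      have h1 : f (π * Equiv.swap i m) ≤ f π := by rw [hτ1]; linarith
      have h2 : f π₁ ≤ f (π * Equiv.swap i m) := hπ₁min _ hτ1S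
      have h3 : f (π * Equiv.swap i m) = f π₁ := le_antisymm (hπf ▸ h1) h2
      have hmem2 : (π * Equiv.swap i m) ∈ S2 := Finset.mem_filter.mpr ⟨hτ1S, h3⟩
      have hgap := hπgap _ hmem2
      simp only [Equiv.Perm.mul_apply, Equiv.swap_apply_left,
        Equiv.swap_apply_of_ne_of_ne hij.symm (fun h => hmj h.symm)] at hgap
      rw [hπmval] at hgap
      omega
    -- τ2 : swap positions j and m; feasible, so g j ≤ g m
    have hτ2 : f (π * Equiv.swap j m) = f π
        + ((((π m : ℕ) : ℝ) - ((π j : ℕ) : ℝ)) * g j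
          + (((π j : ℕ) : ℝ) - ((π m : ℕ) : ℝ)) * g m) := by
      rw [hf]
      beta_reduce
      rw [sum_swap_diff g π (fun h => hmj h.symm)]
    have hτ2S : (π * Equiv.swap j m) ∈ S := by
      rw [hmemS]
      simp only [Equiv.Perm.mul_apply, Equiv.swap_apply_left,
        Equiv.swap_apply_of_ne_of_ne hij (fun h => hmi h.symm)]
      rw [hπmval]
    have h2 := hπmin _ hτ2S
    rw [hτ2] at h2
    have hcast : ((π i : ℕ) : ℝ) + 1 + 1 ≤ ((π j : ℕ) : ℝ) := by exact_mod_cast hlt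
    rw [hπmR] at h2
    nlinarith [h2, hcast, hgm_lt, hgij]
  exact ⟨π, hπfeas, fun τ hτ => hπmin τ ((hmemS τ).mpr hτ), Or.inr hact⟩
end

section
/- Let s ∈ ℝ^p with nonnegative entries and let a ≥ 0. Consider minimizing ‖x − s‖₂ over x ∈ ℝ^p with x ≥ 0 and Σ_i x_i = a. Assume s is sorted in decreasing order. Let k be the largest index in {1,…,p} such that s_k + (a − Σ_{i=1}^k s_i)/k > 0 (taking k = p if this holds for all indices). Then the minimizer x* is given by x*_i = s_i + (a − Σ_{j=1}^k s_j)/k for i ≤ k and x*_i = 0 for i > k. -/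
open Finset

/-- Exact solution of the projection onto the scaled simplex
`{x ≥ 0 : Σ_{i=1}^p x_i = a}` of a nonnegative vector `s` sorted in
decreasing order: with `k` the largest index in `{1,…,p}` such that
`s_k + (a − Σ_{i=1}^k s_i)/k > 0`, the minimizer is
`x*_i = s_i + (a − Σ_{j=1}^k s_j)/k` for `i ≤ k` and `x*_i = 0`
for `i > k`. -/
theorem simplex_projection_waterfilling (p : ℕ) (s : ℕ → ℝ) (a : ℝ)
    (ha : 0 ≤ a)
    (hs : ∀ i ∈ Icc 1 p, 0 ≤ s i)
    (hsort : ∀ i ∈ Icc 1 p, ∀ j ∈ Icc 1 p, i ≤ j → s j ≤ s i)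
    (k : ℕ) (hk1 : 1 ≤ k) (hkp : k ≤ p)
    (hkpos : 0 < s k + (a - ∑ i ∈ Icc 1 k, s i) / k)
    (hkmax : ∀ m, k < m → m ≤ p →
      ¬ (0 < s m + (a - ∑ i ∈ Icc 1 m, s i) / m)) :
    ∀ x : ℕ → ℝ,
      (∀ i ∈ Icc 1 p,
        x i = if i ≤ k then s i + (a - ∑ j ∈ Icc 1 k, s j) / k else 0) →
      ((∀ i ∈ Icc 1 p, 0 ≤ x i) ∧ (∑ i ∈ Icc 1 p, x i = a) ∧
        ∀ y : ℕ → ℝ, (∀ i ∈ Icc 1 p, 0 ≤ y i) →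
          (∑ i ∈ Icc 1 p, y i = a) →
          ∑ i ∈ Icc 1 p, (x i - s i) ^ 2 ≤ ∑ i ∈ Icc 1 p, (y i - s i) ^ 2) := by
  intro x hx
  set S := ∑ i ∈ Icc 1 k, s i with hS
  set lam := (a - S) / k with hlam
  have hkR : (0:ℝ) < (k:ℝ) := by exact_mod_cast hk1
  have hk0 : (k:ℝ) ≠ 0 := ne_of_gt hkR
  have hkmem : k ∈ Icc 1 p := mem_Icc.mpr ⟨hk1, hkp⟩
  -- nonnegativity
  have hxnn : ∀ i ∈ Icc 1 p, 0 ≤ x i := by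
    intro i hi
    rw [hx i hi]
    by_cases h : i ≤ k
    · rw [if_pos h]
      have hski : s k ≤ s i := hsort i hi k hkmem h
      linarith [hkpos]
    · rw [if_neg h]
  -- sum equals a
  have hsum : ∑ i ∈ Icc 1 p, x i = a := by
    have hsub : Icc 1 k ⊆ Icc 1 p := Icc_subset_Icc_right hkp
    have h0 : ∀ i ∈ Icc 1 p, i ∉ Icc 1 k → x i = 0 := by
      intro i hi hik
      rw [hx i hi, if_neg]
      intro hle
      exact hik (mem_Icc.mpr ⟨(mem_Icc.mp hi).1, hle⟩)
    rw [← Finset.sum_subset hsub h0]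
    have : ∀ i ∈ Icc 1 k, x i = s i + lam := by
      intro i hi
      rw [hx i (hsub hi), if_pos (mem_Icc.mp hi).2]
    rw [Finset.sum_congr rfl this, Finset.sum_add_distrib, ← hS,
      Finset.sum_const, Nat.card_Icc]
    simp only [Nat.add_sub_cancel, nsmul_eq_mul]
    rw [hlam]
    field_simp
    ring
  -- key: entries beyond k have s i + lam ≤ 0
  have hneg : ∀ i ∈ Icc 1 p, k < i → s i + lam ≤ 0 := by
    intro i hi hki
    have hip : i ≤ p := (mem_Icc.mp hi).2
    have hk1p : k + 1 ≤ p := le_trans hki hip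
    have h1 := hkmax (k+1) (Nat.lt_succ_self k) hk1p
    push_neg at h1
    have hsum' : ∑ j ∈ Icc 1 (k+1), s j = S + s (k+1) := by
      rw [hS, Finset.sum_Icc_succ_top (by omega : 1 ≤ k + 1)]
    rw [hsum'] at h1
    have hk1R : (0:ℝ) < ((k:ℝ) + 1) := by positivity
    have hcast : ((k+1 : ℕ) : ℝ) = (k:ℝ) + 1 := by push_cast; ring
    rw [hcast] at h1
    have h2 : (a - (S + s (k+1))) / ((k:ℝ)+1) ≤ -(s (k+1)) := by linarith
    have h3 : a - (S + s (k+1)) ≤ -(s (k+1)) * ((k:ℝ)+1) := (div_le_iff₀ hk1R).mp h2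
    have hskk : s (k+1) + lam ≤ 0 := by
      rw [hlam]
      have h4 : (a - S) / (k:ℝ) ≤ -(s (k+1)) := by
        rw [div_le_iff₀ hkR]; nlinarith
      linarith
    have hsle : s i ≤ s (k+1) :=
      hsort (k+1) (mem_Icc.mpr ⟨by omega, hk1p⟩) i hi (by omega)
    linarith
  refine ⟨hxnn, hsum, ?_⟩
  intro y hynn hysum
  have key : 0 ≤ ∑ i ∈ Icc 1 p, (y i - x i) * (x i - s i) := by
    have hterm : ∀ i ∈ Icc 1 p, (y i - x i) * (x i - s i)
        = lam * (y i - x i) + (if i ≤ k then 0 else y i * (-(s i + lam))) := by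
      intro i hi
      rw [hx i hi]
      by_cases h : i ≤ k
      · rw [if_pos h, if_pos h]; ring
      · rw [if_neg h, if_neg h]; ring
    rw [Finset.sum_congr rfl hterm, Finset.sum_add_distrib, ← Finset.mul_sum]
    have hzero : ∑ i ∈ Icc 1 p, (y i - x i) = 0 := by
      rw [Finset.sum_sub_distrib, hysum, hsum]; ring
    rw [hzero, mul_zero, zero_add]
    apply Finset.sum_nonneg
    intro i hi
    by_cases h : i ≤ k
    · rw [if_pos h]
    · rw [if_neg h]
      have h1 := hneg i hi (by omega)
      have h2 := hynn i hi
      nlinarith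
  have expand : ∀ i ∈ Icc 1 p, (y i - s i) ^ 2
      = ((x i - s i) ^ 2 + 2 * ((y i - x i) * (x i - s i))) + (y i - x i) ^ 2 := by
    intro i _; ring
  rw [Finset.sum_congr rfl expand, Finset.sum_add_distrib, Finset.sum_add_distrib,
    ← Finset.mul_sum]
  have hsq : 0 ≤ ∑ i ∈ Icc 1 p, (y i - x i) ^ 2 :=
    Finset.sum_nonneg fun i _ => sq_nonneg _
  nlinarith
end
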